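/- (Theorem 2, NL-MSE version.) Let (g_1, x_1), …, (g_M, x_M) be pairs of vectors in ℝ^K, where g_j denotes the gradient of the network loss with respect to the activation vector x_j, and define the K×K real symmetric matrix C = (1/M) ∑_{j=1}^{M} (x_j x_jᵀ g_j g_jᵀ + g_j g_jᵀ x_j x_jᵀ), with eigenvalues sorted decreasingly and corresponding orthonormal eigenvectors v_1, …, v_K. Fix L ≤ K and for an orthonormal family p_1, …, p_L write x̃_j = ∑_{i=1}^{L} ⟨p_i, x_j⟩ p_i and define the NL-MSE upper bound B(p) = 2·(1/M) ∑_j ‖g_j‖²‖x_j‖² − 2·(1/M) ∑_j ⟨g_j, x_j⟩⟨g_j, x̃_j⟩. Then B(p) = 2·(1/M) ∑_j ‖g_j‖²‖x_j‖² − ∑_{i=1}^{L} p_iᵀ C p_i, and B is minimized over all orthonormal families p_1, …, p_L of size L by taking p_i = v_i, the L principal eigenvectors of C. -/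

import Mathlib

open scoped RealInnerProductSpace
open Matrix

/-- The NL-MSE upper bound `B(p)` from Proposition 1, as an empirical average
over the `M` sample pairs `(g_j, x_j)`. -/
noncomputable def nlBound (K L M : ℕ) (g x : Fin M → EuclideanSpace ℝ (Fin K))
    (p : Fin L → EuclideanSpace ℝ (Fin K)) : ℝ :=
  2 * ((M : ℝ)⁻¹ * ∑ j, ‖g j‖ ^ 2 * ‖x j‖ ^ 2)
    - 2 * ((M : ℝ)⁻¹ * ∑ j, ⟪g j, x j⟫ * ⟪g j, ∑ i, ⟪p i, x j⟫ • p i⟫)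

section Aux

lemma aux_dot3 {K : ℕ} (a b c d p q : Fin K → ℝ) :
    p ⬝ᵥ ((vecMulVec a b * vecMulVec c d) *ᵥ q) = (p ⬝ᵥ a) * ((b ⬝ᵥ c) * (d ⬝ᵥ q)) := by
  simp only [dotProduct, mulVec, vecMulVec_apply, Matrix.mul_apply, Finset.sum_mul,
    Finset.mul_sum]
  rw [Finset.sum_comm]
  congr 1; ext i
  rw [Finset.sum_comm]
  congr 1; ext j
  congr 1; ext k
  ring

lemma aux_inner_eq_dot {K : ℕ} (u w : EuclideanSpace ℝ (Fin K)) :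
    ⟪u, w⟫ = (u : Fin K → ℝ) ⬝ᵥ (w : Fin K → ℝ) := by
  simp [PiLp.inner_apply, dotProduct, mul_comm]

lemma aux_sum_mulVec {K : ℕ} {ι : Type*} (s : Finset ι) (A : ι → Matrix (Fin K) (Fin K) ℝ)
    (u : Fin K → ℝ) : (∑ j ∈ s, A j) *ᵥ u = ∑ j ∈ s, (A j *ᵥ u) := by
  ext k
  simp only [mulVec, dotProduct, Finset.sum_apply, Matrix.sum_apply, Finset.sum_mul]
  rw [Finset.sum_comm]

lemma aux_dotProduct_sum {K : ℕ} {ι : Type*} (s : Finset ι) (u : Fin K → ℝ)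
    (w : ι → Fin K → ℝ) : u ⬝ᵥ (∑ j ∈ s, w j) = ∑ j ∈ s, u ⬝ᵥ w j := by
  simp only [dotProduct, Finset.sum_apply, Finset.mul_sum]
  rw [Finset.sum_comm]

lemma aux_part1 {K L M : ℕ} (g x : Fin M → EuclideanSpace ℝ (Fin K))
    (C : Matrix (Fin K) (Fin K) ℝ)
    (hC : C = (M : ℝ)⁻¹ • ∑ j,
      (vecMulVec (x j) (x j) * vecMulVec (g j) (g j)
        + vecMulVec (g j) (g j) * vecMulVec (x j) (x j)))
    (p : Fin L → EuclideanSpace ℝ (Fin K)) :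
    ∑ i : Fin L, (p i) ⬝ᵥ (C *ᵥ (p i))
      = 2 * ((M : ℝ)⁻¹ * ∑ j, ⟪g j, x j⟫ * ⟪g j, ∑ i, ⟪p i, x j⟫ • p i⟫) := by
  subst hC
  have hR : ∀ j, ⟪g j, x j⟫ * ⟪g j, ∑ i, ⟪p i, x j⟫ • p i⟫
      = ∑ i : Fin L, ⟪g j, x j⟫ * (⟪p i, x j⟫ * ⟪g j, p i⟫) := by
    intro j
    rw [inner_sum, Finset.mul_sum]
    congr 1; ext i
    rw [real_inner_smul_right]
  simp only [hR]
  simp only [smul_mulVec, aux_sum_mulVec, add_mulVec, dotProduct_smul,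
    aux_dotProduct_sum, smul_eq_mul]
  simp only [dotProduct_add, aux_dot3, aux_inner_eq_dot]
  simp only [Finset.mul_sum]
  rw [Finset.sum_comm]
  congr 1; ext j
  congr 1; ext i
  have h1 : (p i : Fin K → ℝ) ⬝ᵥ (x j) = (x j : Fin K → ℝ) ⬝ᵥ (p i) := dotProduct_comm _ _
  have h2 : (g j : Fin K → ℝ) ⬝ᵥ (x j) = (x j : Fin K → ℝ) ⬝ᵥ (g j) := dotProduct_comm _ _
  have h3 : (p i : Fin K → ℝ) ⬝ᵥ (g j) = (g j : Fin K → ℝ) ⬝ᵥ (p i) := dotProduct_comm _ _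
  rw [h1, h2, h3]; ring

lemma aux_keyineq {K L : ℕ} (hL : L ≤ K) (lam : Fin K → ℝ)
    (hsort : ∀ i j : Fin K, i ≤ j → lam j ≤ lam i)
    (t : Fin K → ℝ) (ht0 : ∀ k, 0 ≤ t k) (ht1 : ∀ k, t k ≤ 1)
    (hsum : ∑ k, t k = L) :
    ∑ k, lam k * t k ≤ ∑ i : Fin L, lam (Fin.castLE hL i) := by
  rcases Nat.eq_zero_or_pos K with hK | hK
  · have : L = 0 := by omega
    subst this; subst hK; simp
  set s : Fin K → ℝ := fun k => if (k : ℕ) < L then 1 else 0 with hs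
  have himg : (Finset.univ : Finset (Fin K)).filter (fun k : Fin K => (k : ℕ) < L)
      = Finset.univ.image (Fin.castLE hL) := by
    ext k
    simp only [Finset.mem_filter, Finset.mem_univ, true_and, Finset.mem_image]
    constructor
    · intro h; exact ⟨⟨(k : ℕ), h⟩, by ext; simp⟩
    · rintro ⟨i, rfl⟩; exact i.2
  have hssum : ∑ k, s k = L := by
    rw [hs]
    rw [Finset.sum_ite, Finset.sum_const, Finset.sum_const]
    rw [himg, Finset.card_image_of_injective _ (Fin.castLE_injective hL)]
    simp
  have hsum2 : ∑ k, lam k * s k = ∑ i : Fin L, lam (Fin.castLE hL i) := by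
    have : ∀ k : Fin K, lam k * s k = if (k : ℕ) < L then lam k else 0 := by
      intro k; rw [hs]; by_cases h : (k : ℕ) < L <;> simp [h]
    simp only [this]
    rw [← Finset.sum_filter, himg,
      Finset.sum_image (fun a _ b _ h => Fin.castLE_injective hL h)]
  have hKpos : min L (K - 1) < K := by omega
  set lst : ℝ := lam ⟨min L (K - 1), hKpos⟩ with hlst
  have key : ∀ k : Fin K, lam k * t k ≤ lam k * s k + lst * (t k - s k) := by
    intro k
    have h1 : (lam k - lst) * (t k - s k) ≤ 0 := by
      by_cases hk : (k : ℕ) < L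
      · have hs1 : s k = 1 := if_pos hk
        apply mul_nonpos_of_nonneg_of_nonpos
        · have : lam ⟨min L (K - 1), hKpos⟩ ≤ lam k := by
            apply hsort
            rw [Fin.le_def]
            simp only
            omega
          linarith
        · rw [hs1]; linarith [ht1 k]
      · have hs0 : s k = 0 := if_neg hk
        apply mul_nonpos_of_nonpos_of_nonneg
        · have : lam k ≤ lam ⟨min L (K - 1), hKpos⟩ := by
            apply hsort
            rw [Fin.le_def]
            simp only
            omega
          linarith
        · rw [hs0]; simpa using ht0 k
    nlinarith [h1]
  calc ∑ k, lam k * t k ≤ ∑ k, (lam k * s k + lst * (t k - s k)) :=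
        Finset.sum_le_sum (fun k _ => key k)
    _ = ∑ k, lam k * s k + lst * (∑ k, t k - ∑ k, s k) := by
        rw [Finset.sum_add_distrib, ← Finset.mul_sum, Finset.sum_sub_distrib]
    _ = ∑ i : Fin L, lam (Fin.castLE hL i) := by
        rw [hsum, hssum, sub_self, mul_zero, add_zero, hsum2]

lemma aux_vecMulVec_transpose {K : ℕ} (a b : Fin K → ℝ) :
    (vecMulVec a b)ᵀ = vecMulVec b a := by
  ext i j; simp [vecMulVec_apply, Matrix.transpose_apply, mul_comm]

end Aux

theorem stmt_11 (K L M : ℕ) (hL : L ≤ K)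
    (g x : Fin M → EuclideanSpace ℝ (Fin K))
    (C : Matrix (Fin K) (Fin K) ℝ)
    (hC : C = (M : ℝ)⁻¹ • ∑ j,
      (vecMulVec (x j) (x j) * vecMulVec (g j) (g j)
        + vecMulVec (g j) (g j) * vecMulVec (x j) (x j)))
    (lam : Fin K → ℝ) (hsort : ∀ i j : Fin K, i ≤ j → lam j ≤ lam i)
    (v : Fin K → EuclideanSpace ℝ (Fin K)) (hv : Orthonormal ℝ v)
    (heig : ∀ i : Fin K, C *ᵥ (v i) = lam i • (v i)) :
    ∀ p : Fin L → EuclideanSpace ℝ (Fin K), Orthonormal ℝ p →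
      (nlBound K L M g x p
        = 2 * ((M : ℝ)⁻¹ * ∑ j, ‖g j‖ ^ 2 * ‖x j‖ ^ 2)
          - ∑ i : Fin L, (p i) ⬝ᵥ (C *ᵥ (p i))) ∧
      nlBound K L M g x (fun i => v (Fin.castLE hL i)) ≤ nlBound K L M g x p := by
  intro p hp
  -- the expression of nlBound via the quadratic form, for any family
  have hexp : ∀ q : Fin L → EuclideanSpace ℝ (Fin K),
      nlBound K L M g x q
        = 2 * ((M : ℝ)⁻¹ * ∑ j, ‖g j‖ ^ 2 * ‖x j‖ ^ 2)
          - ∑ i : Fin L, (q i) ⬝ᵥ (C *ᵥ (q i)) := by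
    intro q
    unfold nlBound
    rw [aux_part1 g x C hC q]
  refine ⟨hexp p, ?_⟩
  -- symmetry of C
  have hsym : Cᵀ = C := by
    rw [hC, Matrix.transpose_smul, Matrix.transpose_sum]
    congr 1
    apply Finset.sum_congr rfl
    intro j _
    rw [Matrix.transpose_add, Matrix.transpose_mul, Matrix.transpose_mul,
      aux_vecMulVec_transpose, aux_vecMulVec_transpose, add_comm]
  -- orthonormal basis from v
  have hcard : Fintype.card (Fin K) = Module.finrank ℝ (EuclideanSpace ℝ (Fin K)) := by
    rw [finrank_euclideanSpace_fin, Fintype.card_fin]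
  have hspan := hv.linearIndependent.span_eq_top_of_card_eq_finrank' hcard
  let b : OrthonormalBasis (Fin K) ℝ (EuclideanSpace ℝ (Fin K)) :=
    OrthonormalBasis.mk hv hspan.ge
  have hb : ⇑b = v := OrthonormalBasis.coe_mk _ _
  -- v_k ⬝ (C u) = lam k * ⟪v k, u⟫
  have hVk : ∀ (k : Fin K) (u : EuclideanSpace ℝ (Fin K)),
      (v k : Fin K → ℝ) ⬝ᵥ (C *ᵥ u) = lam k * ⟪v k, u⟫ := by
    intro k u
    rw [Matrix.dotProduct_mulVec]
    have hvm : (v k : Fin K → ℝ) ᵥ* C = lam k • (v k : Fin K → ℝ) := by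
      rw [← hsym, Matrix.vecMul_transpose, heig k]
    rw [hvm, smul_dotProduct, smul_eq_mul, aux_inner_eq_dot]
  -- quadratic form expansion in the eigenbasis
  have hQ : ∀ u : EuclideanSpace ℝ (Fin K),
      (u : Fin K → ℝ) ⬝ᵥ (C *ᵥ u) = ∑ k, lam k * ⟪v k, u⟫ ^ 2 := by
    intro u
    have hpar := b.sum_inner_mul_inner u (WithLp.toLp 2 (C *ᵥ u) : EuclideanSpace ℝ (Fin K))
    rw [aux_inner_eq_dot u, WithLp.ofLp_toLp] at hpar
    rw [← hpar]
    apply Finset.sum_congr rfl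
    intro k _
    rw [hb]
    rw [show ⟪v k, (WithLp.toLp 2 (C *ᵥ u) : EuclideanSpace ℝ (Fin K))⟫
        = (v k : Fin K → ℝ) ⬝ᵥ (C *ᵥ u) from aux_inner_eq_dot _ _, hVk k u,
      real_inner_comm u (v k)]
    ring
  -- quadratic form at eigenvectors
  have hQv : ∀ j : Fin K, (v j : Fin K → ℝ) ⬝ᵥ (C *ᵥ (v j)) = lam j := by
    intro j
    rw [heig j, dotProduct_smul, smul_eq_mul]
    have h1 : (v j : Fin K → ℝ) ⬝ᵥ (v j : Fin K → ℝ) = 1 := by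
      rw [← aux_inner_eq_dot, real_inner_self_eq_norm_sq, hv.1 j]; norm_num
    rw [h1, mul_one]
  -- the weights t
  set t : Fin K → ℝ := fun k => ∑ i : Fin L, ⟪v k, p i⟫ ^ 2 with ht
  have hQp : ∑ i : Fin L, (p i) ⬝ᵥ (C *ᵥ (p i)) = ∑ k, lam k * t k := by
    simp only [hQ, ht]
    rw [Finset.sum_comm]
    apply Finset.sum_congr rfl
    intro k _
    rw [Finset.mul_sum]
  have ht0 : ∀ k, 0 ≤ t k := fun k => Finset.sum_nonneg fun i _ => sq_nonneg _
  have ht1 : ∀ k, t k ≤ 1 := by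
    intro k
    have hb1 := hp.sum_inner_products_le (𝕜 := ℝ) (s := Finset.univ) (v k)
    rw [hv.1 k] at hb1
    calc t k = ∑ i : Fin L, ‖⟪p i, v k⟫‖ ^ 2 := by
          apply Finset.sum_congr rfl
          intro i _
          rw [Real.norm_eq_abs, sq_abs, real_inner_comm]
      _ ≤ 1 := by simpa using hb1
  have htsum : ∑ k, t k = L := by
    have hone : ∀ i : Fin L, ∑ k, ⟪v k, p i⟫ ^ 2 = 1 := by
      intro i
      have hpar := b.sum_inner_mul_inner (p i) (p i)
      rw [real_inner_self_eq_norm_sq, hp.1 i] at hpar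
      rw [← show ((1 : ℝ)) ^ 2 = 1 by norm_num, ← hpar]
      apply Finset.sum_congr rfl
      intro k _
      rw [hb, real_inner_comm (p i) (v k)]
      ring
    rw [ht, Finset.sum_comm]
    rw [Finset.sum_congr rfl (fun i _ => hone i)]
    simp
  have hkey := aux_keyineq hL lam hsort t ht0 ht1 htsum
  rw [hexp p, hexp (fun i => v (Fin.castLE hL i))]
  have hvQ : ∑ i : Fin L, ((fun i => v (Fin.castLE hL i)) i) ⬝ᵥ
      (C *ᵥ ((fun i => v (Fin.castLE hL i)) i)) = ∑ i : Fin L, lam (Fin.castLE hL i) := by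
    apply Finset.sum_congr rfl
    intro i _
    exact hQv (Fin.castLE hL i)
  rw [hvQ, hQp]
  linarith
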